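/- There is a constant M (depending only on the generating set) such that for every n, if (f,0) ∈ Z[1/p] ⊂ G lies in the ball B(n) of the Cayley graph of G = Z[1/p] ⋊ Z with respect to a finite generating set C, then |f| ≤ M·|p|^{nc/2} and denom(f) ≤ M·|p|^{nc/2}, where c = max{|c_i| : (f_i,c_i) ∈ C}. -/

import Mathlib

namespace BS

/-- `Zp p` is the set of `p`-adic fractions `m / p^n` inside `ℚ`, i.e. `ℤ[1/p]`. -/
def Zp (p : ℤ) : Set ℚ := {q | ∃ (m : ℤ) (n : ℕ), q = (m : ℚ) / (p : ℚ) ^ n}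

lemma zero_mem (p : ℤ) : (0 : ℚ) ∈ Zp p := ⟨0, 0, by norm_num⟩

lemma one_mem (p : ℤ) : (1 : ℚ) ∈ Zp p := ⟨1, 0, by norm_num⟩

lemma cast_ne_zero {p : ℤ} (h : 1 < |p|) : (p : ℚ) ≠ 0 := by
  have hp : p ≠ 0 := by rintro rfl; simp at h
  exact_mod_cast hp

lemma neg_mem {p : ℤ} {q : ℚ} (hq : q ∈ Zp p) : -q ∈ Zp p := by
  obtain ⟨m, n, rfl⟩ := hq
  exact ⟨-m, n, by push_cast; ring⟩

lemma add_mem {p : ℤ} (hp : (p : ℚ) ≠ 0) {q r : ℚ} (hq : q ∈ Zp p) (hr : r ∈ Zp p) :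
    q + r ∈ Zp p := by
  obtain ⟨m1, n1, rfl⟩ := hq
  obtain ⟨m2, n2, rfl⟩ := hr
  refine ⟨m1 * p ^ n2 + m2 * p ^ n1, n1 + n2, ?_⟩
  push_cast
  field_simp
  rw [pow_add]; ring

lemma zpow_mul_mem {p : ℤ} (hp : (p : ℚ) ≠ 0) (e : ℤ) {q : ℚ} (hq : q ∈ Zp p) :
    (p : ℚ) ^ e * q ∈ Zp p := by
  obtain ⟨m, n, rfl⟩ := hq
  obtain ⟨k, hk | hk⟩ := e.eq_nat_or_neg
  · subst hk
    refine ⟨m * p ^ k, n, ?_⟩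
    push_cast [zpow_natCast]
    field_simp
  · subst hk
    refine ⟨m, n + k, ?_⟩
    rw [zpow_neg, zpow_natCast]
    push_cast
    field_simp
    rw [pow_add]; ring

lemma zpow_mem {p : ℤ} (hp : (p : ℚ) ≠ 0) (e : ℤ) : (p : ℚ) ^ e ∈ Zp p := by
  simpa using zpow_mul_mem hp e (one_mem p)

lemma sub_mem {p : ℤ} (hp : (p : ℚ) ≠ 0) {q r : ℚ} (hq : q ∈ Zp p) (hr : r ∈ Zp p) :
    q - r ∈ Zp p := by
  simpa [sub_eq_add_neg] using add_mem hp hq (neg_mem hr)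

/-- The underlying type of the semidirect product `ℚ ⋊ ℤ` (with `ℤ` acting by
multiplication by `p`); `f` is the `ℚ`-coordinate and `c` the `ℤ`-coordinate. -/
@[ext] structure QZ (p : ℤ) where
  f : ℚ
  c : ℤ

instance (p : ℤ) [hF : Fact (1 < |p|)] : Group (QZ p) where
  mul x y := ⟨x.f + (p : ℚ) ^ (-x.c) * y.f, x.c + y.c⟩
  one := ⟨0, 0⟩
  inv x := ⟨-((p : ℚ) ^ x.c * x.f), -x.c⟩
  mul_assoc x y z := by
    have hp := cast_ne_zero hF.out
    refine QZ.ext ?_ ?_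
    · show (x.f + (p : ℚ) ^ (-x.c) * y.f) + (p : ℚ) ^ (-(x.c + y.c)) * z.f
        = x.f + (p : ℚ) ^ (-x.c) * (y.f + (p : ℚ) ^ (-y.c) * z.f)
      rw [neg_add, zpow_add₀ hp]
      ring
    · show (x.c + y.c) + z.c = x.c + (y.c + z.c); ring
  one_mul x := by
    refine QZ.ext ?_ ?_
    · show (0 : ℚ) + (p : ℚ) ^ (-(0 : ℤ)) * x.f = x.f
      simp
    · show (0 : ℤ) + x.c = x.c; simp
  mul_one x := by
    refine QZ.ext ?_ ?_
    · show x.f + (p : ℚ) ^ (-x.c) * 0 = x.f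
      simp
    · show x.c + (0 : ℤ) = x.c; simp
  inv_mul_cancel x := by
    have hp := cast_ne_zero hF.out
    refine QZ.ext ?_ ?_
    · show -((p : ℚ) ^ x.c * x.f) + (p : ℚ) ^ (-(-x.c)) * x.f = 0
      rw [neg_neg]
      ring
    · show -x.c + x.c = (0 : ℤ); ring

@[simp] lemma mul_f {p : ℤ} [Fact (1 < |p|)] (x y : QZ p) :
    (x * y).f = x.f + (p : ℚ) ^ (-x.c) * y.f := rfl

@[simp] lemma mul_c {p : ℤ} [Fact (1 < |p|)] (x y : QZ p) : (x * y).c = x.c + y.c := rfl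

@[simp] lemma one_f {p : ℤ} [Fact (1 < |p|)] : (1 : QZ p).f = 0 := rfl
@[simp] lemma one_c {p : ℤ} [Fact (1 < |p|)] : (1 : QZ p).c = 0 := rfl
@[simp] lemma inv_f {p : ℤ} [Fact (1 < |p|)] (x : QZ p) :
    (x⁻¹).f = -((p : ℚ) ^ x.c * x.f) := rfl
@[simp] lemma inv_c {p : ℤ} [Fact (1 < |p|)] (x : QZ p) : (x⁻¹).c = -x.c := rfl

/-- The group `G = ℤ[1/p] ⋊ ℤ`, as a subgroup of `ℚ ⋊ ℤ`. -/
def HZ (p : ℤ) [hF : Fact (1 < |p|)] : Subgroup (QZ p) where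
  carrier := {x | x.f ∈ Zp p}
  mul_mem' {a b} ha hb :=
    add_mem (cast_ne_zero hF.out) ha (zpow_mul_mem (cast_ne_zero hF.out) _ hb)
  one_mem' := zero_mem p
  inv_mem' {a} ha := neg_mem (zpow_mul_mem (cast_ne_zero hF.out) _ ha)

/-- Build an element of `ℤ[1/p] ⋊ ℤ`. -/
def mk {p : ℤ} [Fact (1 < |p|)] (f : ℚ) (c : ℤ) (h : f ∈ Zp p) : HZ p := ⟨⟨f, c⟩, h⟩

/-- The ball of radius `n` in the Cayley graph of a group with generating set `C`. -/
def ball {H : Type*} [Group H] (C : Set H) (n : ℕ) : Set H :=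
  {g | ∃ l : List H, (∀ x ∈ l, x ∈ C) ∧ l.prod = g ∧ l.length ≤ n}

/-- `C` generates the group `H`. -/
def Generates {H : Type*} [Group H] (C : Set H) : Prop :=
  ∀ g : H, ∃ l : List H, (∀ x ∈ l, x ∈ C) ∧ l.prod = g

/-- `C` is symmetric (closed under inverses). -/
def Symm {H : Type*} [Group H] (C : Set H) : Prop := ∀ x ∈ C, x⁻¹ ∈ C

/-- Word length with respect to the generating set `C`. -/
noncomputable def wl {H : Type*} [Group H] (C : Set H) (g : H) : ℕ :=
  sInf {n | g ∈ ball C n}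

/-- `G` is almost convex with respect to `C`: for every `k` there is `N` such that any two
points of `B(n)` at distance at most `k` are joined by a path of length at most `N`
staying inside `B(n)`. -/
def AlmostConvex {H : Type*} [Group H] (C : Set H) : Prop :=
  ∀ k : ℕ, ∃ N : ℕ, ∀ n : ℕ, ∀ g g' : H, g ∈ ball C n → g' ∈ ball C n →
    g⁻¹ * g' ∈ ball C k →
    ∃ l : List H, (∀ x ∈ l, x ∈ C) ∧ l.prod = g⁻¹ * g' ∧ l.length ≤ N ∧
      ∀ m : ℕ, g * (l.take m).prod ∈ ball C n

/-- The least `n` such that `p^n * h` is an integer. -/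
noncomputable def denomExp (p : ℤ) (h : ℚ) : ℕ :=
  sInf {n | ∃ m : ℤ, (p : ℚ) ^ n * h = (m : ℚ)}

/-- `denom h = |p|^n` for the least `n ≥ 0` with `p^n h ∈ ℤ`. -/
noncomputable def denom (p : ℤ) (h : ℚ) : ℚ := (|p| : ℚ) ^ denomExp p h

/-- The relator of the Baumslag–Solitar group `B(1,p)`: here `true` plays the role of
the generator `a` and `false` that of `t`, and the relator is `t⁻¹ a t (a^p)⁻¹`. -/
def bsRels (p : ℤ) : Set (FreeGroup Bool) :=
  {(FreeGroup.of false)⁻¹ * FreeGroup.of true * FreeGroup.of false *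
    (FreeGroup.of true ^ p)⁻¹}

/-- The Baumslag–Solitar group `B(1,p) = ⟨a, t ∣ t⁻¹ a t = a^p⟩`. -/
abbrev BSG (p : ℤ) := PresentedGroup (bsRels p)

/-- The generator `a` of `B(1,p)`. -/
def bsa (p : ℤ) : BSG p := PresentedGroup.of true

/-- The generator `t` of `B(1,p)`. -/
def bst (p : ℤ) : BSG p := PresentedGroup.of false


section Aux
variable {p : ℤ} [hF : Fact (1 < |p|)]

omit hF in
lemma abs_zpow' (a : ℚ) (n : ℤ) : |a ^ n| = |a| ^ n := by
  obtain ⟨k, rfl | rfl⟩ := n.eq_nat_or_neg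
  · simp [abs_pow]
  · simp [zpow_neg, abs_inv, abs_pow]

omit hF in
lemma pow_int_witness (hp : (p:ℚ) ≠ 0) {a b : ℤ} (hab : a ≤ b) {f : ℚ} {m : ℤ}
    (h : (p:ℚ)^a * f = m) : ∃ m' : ℤ, (p:ℚ)^b * f = m' := by
  refine ⟨p^(b-a).toNat * m, ?_⟩
  have hb : (p:ℚ)^b = (p:ℚ)^(((b-a).toNat : ℤ)) * (p:ℚ)^a := by
    rw [← zpow_add₀ hp]; congr 1; omega
  rw [hb, mul_assoc, h, zpow_natCast]
  push_cast; ring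

lemma prod_c (L : List (QZ p)) : (L.prod).c = (L.map QZ.c).sum := by
  induction L with
  | nil => rfl
  | cons x l ih => simp [List.prod_cons, mul_c, ih]

lemma prod_f_abs_le (cN : ℕ) (F : ℚ) (hF0 : 0 ≤ F) (hP1 : (1:ℚ) ≤ |(p:ℚ)|)
    (hB2 : (2:ℚ) ≤ |(p:ℚ)|^cN) (L : List (QZ p))
    (hf : ∀ x ∈ L, |x.f| ≤ F) (hc : ∀ x ∈ L, |x.c| ≤ (cN:ℤ)) :
    |(L.prod).f| ≤ F * ((|(p:ℚ)|^cN) ^ L.length - 1) := by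
  set B : ℚ := |(p:ℚ)|^cN with hB
  induction L with
  | nil => simp [one_f]
  | cons x l ih =>
    have hx := hf x List.mem_cons_self
    have hxc := hc x List.mem_cons_self
    have ihl := ih (fun y hy => hf y (List.mem_cons_of_mem x hy))
      (fun y hy => hc y (List.mem_cons_of_mem x hy))
    have hzp : |(p:ℚ)^(-x.c)| ≤ B := by
      rw [abs_zpow']
      calc |(p:ℚ)|^(-x.c) ≤ |(p:ℚ)|^((cN:ℤ)) := zpow_le_zpow_right₀ hP1 (le_trans (neg_le_abs x.c) hxc)
        _ = B := by rw [hB, zpow_natCast]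
    have hBn : (0:ℚ) ≤ B ^ l.length := by positivity
    rw [List.prod_cons]
    calc |(x * l.prod).f| = |x.f + (p:ℚ)^(-x.c) * l.prod.f| := by rw [mul_f]
      _ ≤ |x.f| + |(p:ℚ)^(-x.c)| * |l.prod.f| := by
          rw [← abs_mul]; exact abs_add_le _ _
      _ ≤ F + B * (F * (B ^ l.length - 1)) := by
          exact add_le_add hx (mul_le_mul hzp ihl (abs_nonneg _) (by linarith))
      _ ≤ F * (B ^ (x :: l).length - 1) := by
          have hlen : (x :: l).length = l.length + 1 := rfl
          rw [hlen, pow_succ]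
          nlinarith [mul_nonneg hF0 (by linarith : (0:ℚ) ≤ B - 2), mul_nonneg hF0 hBn]

lemma prod_f_int (hp : (p:ℚ) ≠ 0) (cN D : ℕ) (L : List (QZ p))
    (hd : ∀ x ∈ L, ∃ m : ℤ, (p:ℚ)^(D:ℤ) * x.f = m)
    (hc : ∀ x ∈ L, |x.c| ≤ (cN:ℤ)) :
    ∀ K : ℤ, (L.length : ℤ) * cN + D ≤ K → ∃ m : ℤ, (p:ℚ)^K * (L.prod).f = m := by
  induction L with
  | nil => exact fun K hK => ⟨0, by simp [one_f]⟩
  | cons x l ih =>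
    intro K hK
    have hlen : ((x :: l).length : ℤ) * cN = (l.length : ℤ) * cN + cN := by
      rw [List.length_cons]; push_cast; ring
    have hxc := hc x List.mem_cons_self
    obtain ⟨mx, hmx⟩ := hd x List.mem_cons_self
    obtain ⟨m1, hm1⟩ := pow_int_witness hp
      (show (D:ℤ) ≤ K by nlinarith [mul_nonneg (Int.natCast_nonneg (x::l).length) (Int.natCast_nonneg cN)]) hmx
    obtain ⟨ml, hml⟩ := ih (fun y hy => hd y (List.mem_cons_of_mem x hy))
      (fun y hy => hc y (List.mem_cons_of_mem x hy)) ((l.length:ℤ)*cN + D) le_rfl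
    obtain ⟨m2, hm2⟩ := pow_int_witness hp
      (show (l.length:ℤ)*cN + D ≤ K - x.c by have h3 := abs_le.mp hxc; linarith [h3.1, h3.2]) hml
    refine ⟨m1 + m2, ?_⟩
    rw [List.prod_cons, mul_f, mul_add]
    have h2 : (p:ℚ)^K * ((p:ℚ)^(-x.c) * (l.prod).f) = (p:ℚ)^(K - x.c) * (l.prod).f := by
      rw [← mul_assoc, ← zpow_add₀ hp, ← sub_eq_add_neg]
    rw [h2, hm1, hm2]
    push_cast; ring

end Aux
/-- Lemma 1 (simultaneous bound): there is a constant `M` so that any `(f,0) ∈ B(n)`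
satisfies both `|f| ≤ M |p|^{nc/2}` and `denom f ≤ M |p|^{nc/2}`. -/
theorem lemma_one_simultaneous (p : ℤ) [Fact (1 < |p|)] (C : Set (HZ p))
    (hCfin : C.Finite) (hCsym : Symm C) (hCgen : Generates C)
    (c : ℤ) (hcmax : ∀ g ∈ C, |((g : QZ p)).c| ≤ c) (hcatt : ∃ g ∈ C, |((g : QZ p)).c| = c) :
    ∃ M : ℝ, ∀ n : ℕ, ∀ f : ℚ, ∀ hf : f ∈ Zp p,
      mk f 0 hf ∈ ball C n →
        ((|f| : ℚ) : ℝ) ≤ M * (|p| : ℝ) ^ (((n : ℝ) * (c : ℝ)) / 2) ∧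
        ((denom p f : ℚ) : ℝ) ≤ M * (|p| : ℝ) ^ (((n : ℝ) * (c : ℝ)) / 2) := by
  have hp1 : (1:ℤ) < |p| := Fact.out
  have hp : (p:ℚ) ≠ 0 := cast_ne_zero hp1
  have hP2 : (2:ℚ) ≤ |(p:ℚ)| := by
    have h2 : (2:ℤ) ≤ |p| := hp1
    calc (2:ℚ) = ((2:ℤ):ℚ) := by norm_num
      _ ≤ ((|p|:ℤ):ℚ) := by exact_mod_cast h2
      _ = |(p:ℚ)| := by push_cast; ring
  have hP1 : (1:ℚ) ≤ |(p:ℚ)| := by linarith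
  -- `c ≥ 1` since `C` generates an element with nonzero `ℤ`-coordinate
  have hc1 : 1 ≤ c := by
    obtain ⟨l0, hl0C, hl0p⟩ := hCgen (mk 0 1 (zero_mem p))
    by_contra hcon
    push_neg at hcon
    have hcoe : ((l0.prod : HZ p) : QZ p) = (l0.map (HZ p).subtype).prod :=
      (List.prod_hom l0 (HZ p).subtype).symm
    have h1 : ((l0.prod : HZ p) : QZ p).c = 1 := by rw [hl0p]; rfl
    rw [hcoe, prod_c] at h1
    have h0 : ((l0.map (HZ p).subtype).map QZ.c).sum = 0 := by
      apply List.sum_eq_zero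
      intro x hx
      rw [List.mem_map] at hx
      obtain ⟨y, hy, rfl⟩ := hx
      rw [List.mem_map] at hy
      obtain ⟨g, hg, rfl⟩ := hy
      have h5 := hcmax g (hl0C g hg)
      have h6 := abs_nonneg ((g : QZ p)).c
      have h7 : |((g : QZ p)).c| = 0 := by omega
      exact abs_eq_zero.mp h7
    omega
  obtain ⟨cN, rfl⟩ : ∃ k : ℕ, c = (k : ℤ) := ⟨c.toNat, (Int.toNat_of_nonneg (by omega)).symm⟩
  have hcN1 : 1 ≤ cN := by exact_mod_cast hc1
  set B : ℚ := |(p:ℚ)|^cN with hBdef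
  have hB2 : (2:ℚ) ≤ B := by
    calc (2:ℚ) ≤ |(p:ℚ)| := hP2
      _ = |(p:ℚ)|^1 := (pow_one _).symm
      _ ≤ B := pow_le_pow_right₀ hP1 hcN1
  have hB1 : (1:ℚ) ≤ B := by linarith
  have hB0 : (0:ℚ) ≤ B := by linarith
  -- bound `F` on the `ℚ`-coordinates of `C`
  obtain ⟨F0, hF0b⟩ := (Set.Finite.image (fun g : HZ p => |((g : QZ p)).f|) hCfin).bddAbove
  obtain ⟨F, hF0, hFle⟩ : ∃ F : ℚ, 0 ≤ F ∧ ∀ g ∈ C, |((g : QZ p)).f| ≤ F :=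
    ⟨max F0 0, le_max_right _ _, fun g hg =>
      le_trans (hF0b (Set.mem_image_of_mem _ hg)) (le_max_left _ _)⟩
  -- bound `D` on the denominator exponents of `C`
  set D := hCfin.toFinset.sup (fun g => denomExp p ((g : QZ p)).f) with hDdef
  have hDw : ∀ g ∈ C, ∃ m : ℤ, (p:ℚ)^(D:ℤ) * ((g : QZ p)).f = m := by
    intro g hg
    obtain ⟨m0, n0, hmn⟩ := g.2
    have hne : {k : ℕ | ∃ m : ℤ, (p:ℚ)^k * ((g : QZ p)).f = (m:ℚ)}.Nonempty := by
      refine ⟨n0, m0, ?_⟩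
      rw [hmn]
      field_simp
    have hmem := Nat.sInf_mem hne
    obtain ⟨md, hmd⟩ := hmem
    have hle : denomExp p ((g : QZ p)).f ≤ D := by
      rw [hDdef]
      exact Finset.le_sup (f := fun g : HZ p => denomExp p ((g : QZ p)).f)
        (hCfin.mem_toFinset.mpr hg)
    have hzd : (p:ℚ)^((denomExp p ((g : QZ p)).f : ℕ) : ℤ) * ((g : QZ p)).f = (md:ℚ) := by
      rw [zpow_natCast]
      exact hmd
    exact pow_int_witness hp (show ((denomExp p ((g : QZ p)).f : ℕ) : ℤ) ≤ (D:ℤ) by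
      exact_mod_cast hle) hzd
  -- real constants
  set R : ℝ := ((|p| : ℤ) : ℝ) with hRdef
  have hR2 : (2:ℝ) ≤ R := by rw [hRdef]; exact_mod_cast (show (2:ℤ) ≤ |p| from hp1)
  have hR1 : (1:ℝ) ≤ R := by linarith
  have hR0 : (0:ℝ) < R := by linarith
  have hRabs : R = |((p:ℤ):ℝ)| := by rw [hRdef]; push_cast; ring
  refine ⟨(2*(F:ℝ) + R^D) * R^cN, ?_⟩
  intro n f hf hball
  obtain ⟨l, hlC, hlp, hlen⟩ := hball
  set L : List (QZ p) := l.map (HZ p).subtype with hLdef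
  have hLC : ∀ x ∈ L, ∃ g ∈ C, ((g : QZ p)) = x := by
    intro x hx
    rw [hLdef, List.mem_map] at hx
    obtain ⟨g, hg, rfl⟩ := hx
    exact ⟨g, hlC g hg, rfl⟩
  have hLprod : L.prod = ⟨f, 0⟩ := by
    rw [hLdef, List.prod_hom l (HZ p).subtype, hlp]; rfl
  set n' := L.length with hn'def
  have hn'n : n' ≤ n := by rw [hn'def, hLdef, List.length_map]; exact hlen
  set m := (n' + 1) / 2 with hmdef
  set q := (n + 1) / 2 with hqdef
  have hmq : m ≤ q := Nat.div_le_div_right (by omega)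
  have hm2 : n' - m ≤ q := by omega
  set L1 := L.take m with hL1def
  set L2 := L.drop m with hL2def
  have hL1len : L1.length = m := by rw [hL1def, List.length_take]; omega
  have hL2len : L2.length = n' - m := by rw [hL2def, List.length_drop]
  have hsplit : L1.prod * L2.prod = L.prod := List.prod_take_mul_prod_drop L m
  have hc0 : (L1.prod).c + (L2.prod).c = 0 := by
    have h0 : (L.prod).c = 0 := by rw [hLprod]
    rw [← hsplit, mul_c] at h0
    exact h0
  set L2' := (L2.map Inv.inv).reverse with hL2'def
  have hL2'prod : L2'.prod = (L2.prod)⁻¹ := (List.prod_inv_reverse L2).symm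
  have hL2'len : L2'.length = n' - m := by
    rw [hL2'def, List.length_reverse, List.length_map, hL2len]
  have hL1C : ∀ x ∈ L1, ∃ g ∈ C, ((g : QZ p)) = x := fun x hx =>
    hLC x (List.mem_of_mem_take hx)
  have hL2'C : ∀ x ∈ L2', ∃ g ∈ C, ((g : QZ p)) = x := by
    intro x hx
    rw [hL2'def, List.mem_reverse, List.mem_map] at hx
    obtain ⟨y, hy, rfl⟩ := hx
    obtain ⟨g, hg, rfl⟩ := hLC y (List.mem_of_mem_drop hy)
    exact ⟨g⁻¹, hCsym g hg, rfl⟩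
  have hprop : ∀ (L' : List (QZ p)), (∀ x ∈ L', ∃ g ∈ C, ((g : QZ p)) = x) →
      (∀ x ∈ L', |x.f| ≤ F) ∧ (∀ x ∈ L', |x.c| ≤ (cN:ℤ)) ∧
      (∀ x ∈ L', ∃ mm : ℤ, (p:ℚ)^(D:ℤ) * x.f = mm) := by
    intro L' hL'
    refine ⟨?_, ?_, ?_⟩ <;> intro x hx <;> obtain ⟨g, hg, rfl⟩ := hL' x hx
    · exact hFle g hg
    · exact hcmax g hg
    · exact hDw g hg
  obtain ⟨h1f, h1c, h1d⟩ := hprop L1 hL1C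
  obtain ⟨h2f, h2c, h2d⟩ := hprop L2' hL2'C
  -- the key splitting of `f`
  have hfeq : f = (L1.prod).f - (L2'.prod).f := by
    have hmf : (L.prod).f = (L1.prod).f + (p:ℚ)^(-(L1.prod).c) * (L2.prod).f := by
      rw [← hsplit, mul_f]
    rw [hLprod] at hmf
    have hmf2 : f = (L1.prod).f + (p:ℚ)^(-(L1.prod).c) * (L2.prod).f := hmf
    rw [hL2'prod, inv_f]
    have hcc : -(L1.prod).c = (L2.prod).c := by omega
    rw [hmf2, hcc]
    ring
  -- rational absolute-value bounds
  have habs1 : |(L1.prod).f| ≤ F * B^q := by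
    have h1 := prod_f_abs_le cN F hF0 hP1 hB2 L1 h1f h1c
    have h2 : B ^ L1.length ≤ B ^ q := pow_le_pow_right₀ hB1 (by omega)
    nlinarith [mul_le_mul_of_nonneg_left h2 hF0]
  have habs2 : |(L2'.prod).f| ≤ F * B^q := by
    have h1 := prod_f_abs_le cN F hF0 hP1 hB2 L2' h2f h2c
    have h2 : B ^ L2'.length ≤ B ^ q := pow_le_pow_right₀ hB1 (by omega)
    nlinarith [mul_le_mul_of_nonneg_left h2 hF0]
  have habsf : |f| ≤ 2 * F * B^q := by
    rw [hfeq]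
    calc |(L1.prod).f - (L2'.prod).f| ≤ |(L1.prod).f| + |(L2'.prod).f| := abs_sub _ _
      _ ≤ 2 * F * B^q := by linarith
  -- denominator bound
  set K : ℕ := q * cN + D with hKdef
  have hKge : ∀ j : ℕ, j ≤ q → j * cN + D ≤ K := by
    intro j hj
    rw [hKdef]
    exact Nat.add_le_add_right (Nat.mul_le_mul_right cN hj) D
  have hi1 : ∃ m1 : ℤ, (p:ℚ)^(K:ℤ) * (L1.prod).f = m1 := by
    apply prod_f_int hp cN D L1 h1d h1c
    rw [hL1len]
    exact_mod_cast hKge m hmq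
  have hi2 : ∃ m2 : ℤ, (p:ℚ)^(K:ℤ) * (L2'.prod).f = m2 := by
    apply prod_f_int hp cN D L2' h2d h2c
    rw [hL2'len]
    exact_mod_cast hKge (n' - m) hm2
  have hiK : ∃ mm : ℤ, (p:ℚ)^K * f = (mm:ℚ) := by
    obtain ⟨m1, h1⟩ := hi1
    obtain ⟨m2, h2⟩ := hi2
    refine ⟨m1 - m2, ?_⟩
    rw [← zpow_natCast (p:ℚ) K, hfeq, mul_sub, h1, h2]
    push_cast; ring
  have hdE : denomExp p f ≤ K := Nat.sInf_le hiK
  have hdenom : denom p f ≤ |(p:ℚ)|^K := by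
    have hde : denom p f = |(p:ℚ)| ^ denomExp p f := by
      rw [denom]
    rw [hde]
    exact pow_le_pow_right₀ hP1 hdE
  -- the real estimates
  have hq2 : (q:ℝ) ≤ ((n:ℝ)+1)/2 := by
    have h1 : 2*q ≤ n+1 := by omega
    have h2 := (Nat.cast_le (α := ℝ)).mpr h1
    push_cast at h2
    linarith
  set E : ℝ := (((n:ℕ) : ℝ) * (((cN:ℕ):ℤ) : ℝ)) / 2 with hEdef
  have hE : E = ((n:ℝ) * (cN:ℝ)) / 2 := by rw [hEdef]; push_cast; ring
  have hE0 : 0 ≤ R ^ E := Real.rpow_nonneg (le_of_lt hR0) E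
  have hcNR1 : (1:ℝ) ≤ (cN:ℝ) := by exact_mod_cast hcN1
  have hkey : (R^cN)^q ≤ R^cN * R^E := by
    have e1 : ((R^cN)^q : ℝ) = R ^ (((cN*q : ℕ)):ℝ) := by
      rw [← pow_mul, Real.rpow_natCast]
    have e2 : R ^ (((cN*q : ℕ)):ℝ) ≤ R ^ ((cN:ℝ) + ((n:ℝ)*(cN:ℝ))/2) := by
      apply Real.rpow_le_rpow_of_exponent_le hR1
      push_cast
      nlinarith [hq2, hcNR1]
    calc (R^cN)^q = R ^ (((cN*q : ℕ)):ℝ) := e1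
      _ ≤ R ^ ((cN:ℝ) + ((n:ℝ)*(cN:ℝ))/2) := e2
      _ = R^cN * R^E := by rw [Real.rpow_add hR0, Real.rpow_natCast, hE]
  have hRcN0 : (0:ℝ) ≤ R^cN := by positivity
  have hRD0 : (0:ℝ) ≤ R^D := by positivity
  have hFR0 : (0:ℝ) ≤ (F:ℝ) := by exact_mod_cast hF0
  have hBR : ((B:ℚ):ℝ) = R^cN := by
    rw [hBdef]
    push_cast
    rw [hRdef]
    push_cast
    ring
  clear_value B D R L n' m q L1 L2 L2' K E
  constructor
  · have cast1 : ((|f| : ℚ) : ℝ) ≤ 2 * (F:ℝ) * (R^cN)^q := by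
      have := (Rat.cast_le (K := ℝ)).mpr habsf
      push_cast at this
      rw [hBR] at this
      rw [Rat.cast_abs]
      exact this
    calc ((|f| : ℚ) : ℝ) ≤ 2 * (F:ℝ) * (R^cN)^q := cast1
      _ ≤ 2 * (F:ℝ) * (R^cN * R^E) :=
          mul_le_mul_of_nonneg_left hkey (by linarith)
      _ ≤ (2*(F:ℝ) + R^D) * (R^cN * R^E) :=
          mul_le_mul_of_nonneg_right (by linarith) (mul_nonneg hRcN0 hE0)
      _ = (2*(F:ℝ) + R^D) * R^cN * R^E := by ring
      _ = (2*(F:ℝ) + R^D) * R^cN * (|p| : ℝ)^E := by rw [← hRabs]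
  · have cast2 : ((denom p f : ℚ) : ℝ) ≤ R^D * (R^cN)^q := by
      have := (Rat.cast_le (K := ℝ)).mpr hdenom
      push_cast at this
      rw [← hRabs] at this
      calc ((denom p f : ℚ) : ℝ) ≤ R^K := this
        _ = R^D * (R^cN)^q := by rw [hKdef, pow_add, ← pow_mul, mul_comm cN q]; ring
    calc ((denom p f : ℚ) : ℝ) ≤ R^D * (R^cN)^q := cast2
      _ ≤ R^D * (R^cN * R^E) :=
          mul_le_mul_of_nonneg_left hkey hRD0
      _ ≤ (2*(F:ℝ) + R^D) * (R^cN * R^E) :=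
          mul_le_mul_of_nonneg_right (by linarith) (mul_nonneg hRcN0 hE0)
      _ = (2*(F:ℝ) + R^D) * R^cN * R^E := by ring
      _ = (2*(F:ℝ) + R^D) * R^cN * (|p| : ℝ)^E := by rw [← hRabs]

end BS
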